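/- Let n ≥ 4 be an even integer and let R_(n,2) be the (n,2)-regular graph of order n, i.e., the complete graph K_n with a perfect matching removed. Then rvcl(R_(n,2)) ≥ n/2 + 1; equivalently, R_(n,2) admits no locating rainbow k-coloring with k ≤ n/2. -/

import Mathlib

namespace LocatingRainbow

open SimpleGraph

variable {V : Type*}

/-- The internal vertices of a walk: its support without the endpoints. -/
def internalVertices {G : SimpleGraph V} {u v : V} (p : G.Walk u v) : List V :=
  p.support.tail.dropLast

/-- `c` is a rainbow vertex coloring of `G` (with colors in `Fin k`) if any two distinct
vertices are joined by a path whose internal vertices have pairwise distinct colors. -/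
def IsRainbowVertexColoring (G : SimpleGraph V) {k : ℕ} (c : V → Fin k) : Prop :=
  ∀ u v : V, u ≠ v → ∃ p : G.Walk u v, p.IsPath ∧ ((internalVertices p).map c).Nodup

/-- The distance from a vertex `v` to the color class of the color `i`. -/
noncomputable def distToColor (G : SimpleGraph V) {k : ℕ} (c : V → Fin k) (v : V) (i : Fin k) :
    ℕ :=
  sInf {m | ∃ y, c y = i ∧ G.dist v y = m}

/-- The rainbow code of a vertex `v`: the vector of distances to all color classes. -/
noncomputable def rainbowCode (G : SimpleGraph V) {k : ℕ} (c : V → Fin k) (v : V) :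
    Fin k → ℕ :=
  fun i => distToColor G c v i

/-- `c` is a locating rainbow coloring if it is a rainbow vertex coloring and distinct
vertices have distinct rainbow codes. -/
def IsLocatingRainbowColoring (G : SimpleGraph V) {k : ℕ} (c : V → Fin k) : Prop :=
  IsRainbowVertexColoring G c ∧ Function.Injective (rainbowCode G c)

/-- The rainbow vertex connection number of `G`. -/
noncomputable def rvc (G : SimpleGraph V) : ℕ :=
  sInf {k | ∃ c : V → Fin k, IsRainbowVertexColoring G c}

/-- The locating rainbow connection number of `G`. -/
noncomputable def rvcl (G : SimpleGraph V) : ℕ :=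
  sInf {k | ∃ c : V → Fin k, IsLocatingRainbowColoring G c}

end LocatingRainbow

namespace LocatingRainbow

open SimpleGraph

/-- The `(n,2)`-regular graph (for even `n`): the complete graph on `Fin n` with the
perfect matching `{vᵢ v_{i+n/2}}` (indices mod `n`) removed; every vertex has degree
`n - 2`. -/
def Rn2 (n : ℕ) : SimpleGraph (Fin n) where
  Adj i j := i ≠ j ∧ (i.val + n / 2) % n ≠ j.val ∧ (j.val + n / 2) % n ≠ i.val
  symm := ⟨fun _ _ ⟨h1, h2, h3⟩ => ⟨h1.symm, h3, h2⟩⟩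
  loopless := ⟨fun _ h => h.1 rfl⟩

/-- The `(n,3)`-regular graph: the complement of the cycle `C_n`, i.e. the complete graph
with the edges of a Hamiltonian cycle removed; every vertex has degree `n - 3`. -/
def Rn3 (n : ℕ) : SimpleGraph (Fin n) := (cycleGraph n)ᶜ

/-- The `(n,t)`-regular graph for `t ∈ {2, 3}`. -/
def Rnt (n t : ℕ) : SimpleGraph (Fin n) := if t = 2 then Rn2 n else Rn3 n

end LocatingRainbow



namespace LocatingRainbow

open SimpleGraph

open scoped Classical

variable {n : ℕ}

/-- The matched vertex. -/
def mtch (v : Fin n) : Fin n := ⟨(v.val + n / 2) % n, Nat.mod_lt _ v.pos⟩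

lemma mtch_val (v : Fin n) :
    (mtch v).val = if v.val + n / 2 < n then v.val + n / 2 else v.val + n / 2 - n := by
  show (v.val + n / 2) % n = _
  have hv := v.isLt
  split_ifs with h
  · exact Nat.mod_eq_of_lt h
  · rw [Nat.mod_eq_sub_mod (le_of_not_gt h)]
    exact Nat.mod_eq_of_lt (by omega)

lemma mtch_mtch (hpar : Even n) (v : Fin n) : mtch (mtch v) = v := by
  have h2 : n % 2 = 0 := Nat.even_iff.mp hpar
  have hv := v.isLt
  apply Fin.ext
  rw [mtch_val, mtch_val]
  split_ifs <;> omega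

lemma mtch_ne (hn : 4 ≤ n) (hpar : Even n) (v : Fin n) : mtch v ≠ v := by
  have h2 : n % 2 = 0 := Nat.even_iff.mp hpar
  have hv := v.isLt
  intro h
  have := congrArg Fin.val h
  rw [mtch_val] at this
  split_ifs at this <;> omega

lemma mtch_eq_iff (hpar : Even n) {u v : Fin n} : mtch v = u ↔ v = mtch u :=
  ⟨fun h => by rw [← h, mtch_mtch hpar], fun h => by rw [h, mtch_mtch hpar]⟩

lemma mtch_inj (hpar : Even n) {u v : Fin n} (h : mtch u = mtch v) : u = v := by
  have := congrArg mtch h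
  rwa [mtch_mtch hpar, mtch_mtch hpar] at this

lemma adj_iff (hpar : Even n) (u v : Fin n) :
    (Rn2 n).Adj u v ↔ u ≠ v ∧ v ≠ mtch u := by
  show (u ≠ v ∧ (u.val + n / 2) % n ≠ v.val ∧ (v.val + n / 2) % n ≠ u.val) ↔ _
  constructor
  · rintro ⟨h1, h2, -⟩
    exact ⟨h1, fun hv => h2 (congrArg Fin.val hv).symm⟩
  · rintro ⟨h1, h2⟩
    refine ⟨h1, fun he => h2 (Fin.ext he.symm), fun he => h2 ?_⟩
    exact (mtch_eq_iff hpar).mp (Fin.ext he)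

lemma exists_w (hn : 4 ≤ n) (u : Fin n) : ∃ w : Fin n, w ≠ u ∧ w ≠ mtch u := by
  by_contra h
  push_neg at h
  have hsub : (Finset.univ : Finset (Fin n)) ⊆ {u, mtch u} := by
    intro w _
    rcases eq_or_ne w u with h' | h'
    · simp [h']
    · simp [h w h']
  have h1 := Finset.card_le_card hsub
  have h3 := Finset.card_insert_le u ({mtch u} : Finset (Fin n))
  simp at h1 h3
  omega

lemma reach (hn : 4 ≤ n) (hpar : Even n) (u v : Fin n) : (Rn2 n).Reachable u v := by
  rcases eq_or_ne u v with rfl | huv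
  · rfl
  rcases eq_or_ne v (mtch u) with rfl | hm
  · obtain ⟨w, hw1, hw2⟩ := exists_w hn u
    have ha : (Rn2 n).Adj u w := (adj_iff hpar u w).mpr ⟨hw1.symm, hw2⟩
    have hb : (Rn2 n).Adj w (mtch u) := (adj_iff hpar w (mtch u)).mpr
      ⟨hw2, fun he => hw1 (mtch_inj hpar he).symm⟩
    exact ha.reachable.trans hb.reachable
  · exact ((adj_iff hpar u v).mpr ⟨huv, hm⟩).reachable

lemma dist_mtch (hn : 4 ≤ n) (hpar : Even n) (u : Fin n) :
    (Rn2 n).dist u (mtch u) = 2 := by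
  obtain ⟨w, hw1, hw2⟩ := exists_w hn u
  have ha : (Rn2 n).Adj u w := (adj_iff hpar u w).mpr ⟨hw1.symm, hw2⟩
  have hb : (Rn2 n).Adj w (mtch u) := (adj_iff hpar w (mtch u)).mpr
    ⟨hw2, fun he => hw1 (mtch_inj hpar he).symm⟩
  have hle : (Rn2 n).dist u (mtch u) ≤ 2 := by
    have := SimpleGraph.dist_le (Walk.cons ha (Walk.cons hb Walk.nil))
    simpa using this
  have hne : u ≠ mtch u := (mtch_ne hn hpar u).symm
  have h0 : (Rn2 n).dist u (mtch u) ≠ 0 := by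
    intro h
    rcases SimpleGraph.dist_eq_zero_iff_eq_or_not_reachable.mp h with h' | h'
    · exact hne h'
    · exact h' (reach hn hpar u (mtch u))
  have h1 : (Rn2 n).dist u (mtch u) ≠ 1 := by
    intro h
    have := SimpleGraph.dist_eq_one_iff_adj.mp h
    rw [adj_iff hpar] at this
    exact this.2 rfl
  omega

lemma dist_cases (hn : 4 ≤ n) (hpar : Even n) (v y : Fin n) :
    (Rn2 n).dist v y = if v = y then 0 else if y = mtch v then 2 else 1 := by
  split_ifs with h1 h2
  · rw [h1]; exact SimpleGraph.dist_self
  · rw [h2]; exact dist_mtch hn hpar v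
  · exact SimpleGraph.dist_eq_one_iff_adj.mpr ((adj_iff hpar v y).mpr ⟨h1, h2⟩)

lemma distToColor_cases (hn : 4 ≤ n) (hpar : Even n) {k : ℕ} (c : Fin n → Fin k)
    (v : Fin n) (i : Fin k) :
    distToColor (Rn2 n) c v i =
      if ∃ y, c y = i then
        (if c v = i then 0 else if ∀ y, c y = i → y = mtch v then 2 else 1)
      else 0 := by
  unfold distToColor
  split_ifs with hex h1 h2
  · -- c v = i
    exact Nat.sInf_eq_zero.mpr (Or.inl ⟨v, h1, SimpleGraph.dist_self⟩)
  · -- all of color i equal mtch v, class nonempty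
    obtain ⟨y0, hy0⟩ := hex
    have hy0' : y0 = mtch v := h2 y0 hy0
    have hmem : (2 : ℕ) ∈ {m | ∃ y, c y = i ∧ (Rn2 n).dist v y = m} :=
      ⟨mtch v, hy0' ▸ hy0, dist_mtch hn hpar v⟩
    refine le_antisymm (Nat.sInf_le hmem) (le_csInf ⟨2, hmem⟩ ?_)
    rintro m ⟨y, hy, rfl⟩
    rw [h2 y hy, dist_mtch hn hpar v]
  · -- some y of color i with y ≠ mtch v
    push_neg at h2
    obtain ⟨y, hy, hy'⟩ := h2
    have hvy : v ≠ y := fun e => h1 (e ▸ hy)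
    have hd : (Rn2 n).dist v y = 1 := by
      rw [dist_cases hn hpar, if_neg hvy, if_neg hy']
    have hmem : (1 : ℕ) ∈ {m | ∃ z, c z = i ∧ (Rn2 n).dist v z = m} := ⟨y, hy, hd⟩
    refine le_antisymm (Nat.sInf_le hmem) (le_csInf ⟨1, hmem⟩ ?_)
    rintro m ⟨z, hz, rfl⟩
    have hvz : v ≠ z := fun e => h1 (e ▸ hz)
    rw [dist_cases hn hpar, if_neg hvz]
    split_ifs <;> omega
  · -- empty class
    have : {m | ∃ y, c y = i ∧ (Rn2 n).dist v y = m} = ∅ := by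
      ext m
      simp only [Set.mem_setOf_eq, Set.mem_empty_iff_false, iff_false, not_exists]
      rintro y ⟨hy, -⟩
      exact hex ⟨y, hy⟩
    rw [this, Nat.sInf_empty]

lemma distToColor_id (hn : 4 ≤ n) (v i : Fin n) :
    distToColor (Rn2 n) (fun x : Fin n => x) v i = (Rn2 n).dist v i := by
  unfold distToColor
  have hs : {m | ∃ y : Fin n, (fun x : Fin n => x) y = i ∧ (Rn2 n).dist v y = m}
      = {(Rn2 n).dist v i} := by
    ext m
    simp only [Set.mem_setOf_eq, Set.mem_singleton_iff]
    constructor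
    · rintro ⟨y, rfl, rfl⟩; rfl
    · rintro rfl; exact ⟨i, rfl, rfl⟩
  rw [hs, csInf_singleton]

lemma id_locating (hn : 4 ≤ n) (hpar : Even n) :
    IsLocatingRainbowColoring (Rn2 n) (fun x : Fin n => x) := by
  constructor
  · intro u v huv
    by_cases hm : v = mtch u
    · obtain ⟨w, hw1, hw2⟩ := exists_w hn u
      have ha : (Rn2 n).Adj u w := (adj_iff hpar u w).mpr ⟨hw1.symm, hw2⟩
      have hb : (Rn2 n).Adj w v := by
        rw [hm]
        exact (adj_iff hpar w (mtch u)).mpr ⟨hw2, fun he => hw1 (mtch_inj hpar he).symm⟩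
      refine ⟨Walk.cons ha (Walk.cons hb Walk.nil), ?_, ?_⟩
      · simp [Walk.cons_isPath_iff, ha.ne, hb.ne, huv]
      · simp [internalVertices]
    · have h : (Rn2 n).Adj u v := (adj_iff hpar u v).mpr ⟨huv, hm⟩
      refine ⟨Walk.cons h Walk.nil, ?_, ?_⟩
      · simp [Walk.cons_isPath_iff, huv]
      · simp [internalVertices]
  · intro u v h
    have h0 := congrFun h u
    simp only [rainbowCode] at h0
    rw [distToColor_id hn, distToColor_id hn, SimpleGraph.dist_self] at h0
    rcases SimpleGraph.dist_eq_zero_iff_eq_or_not_reachable.mp h0.symm with h' | h'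
    · exact h'.symm
    · exact absurd (reach hn hpar v u) h'

lemma no_locating (hn : 4 ≤ n) (hpar : Even n) {k : ℕ} (hk : k ≤ n / 2)
    (c : Fin n → Fin k) : ¬ IsLocatingRainbowColoring (Rn2 n) c := by
  rintro ⟨-, hinj⟩
  classical
  by_cases hc : Function.Injective c
  · have hle := Fintype.card_le_of_injective c hc
    simp only [Fintype.card_fin] at hle
    omega
  rw [Function.not_injective_iff] at hc
  obtain ⟨a, b, hab, hab'⟩ := hc
  have hk1 : 1 ≤ k := (c a).pos
  set Sing : Fin n → Prop := fun v => ∀ w, c w = c v → w = v with hSing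
  set A : Finset (Fin n) := Finset.univ.filter (fun v => Sing (mtch v)) with hA
  set SC : Finset (Fin k) := Finset.univ.filter (fun i => ∃ v, c v = i ∧ Sing v) with hSC
  have hA_le : A.card ≤ SC.card := by
    apply Finset.card_le_card_of_injOn (fun v => c (mtch v))
    · intro v hv
      rw [Finset.mem_coe, hA, Finset.mem_filter] at hv
      rw [Finset.mem_coe, hSC, Finset.mem_filter]
      exact ⟨Finset.mem_univ _, mtch v, rfl, hv.2⟩
    · intro u hu v hv he
      have hu2 : Sing (mtch u) := (Finset.mem_filter.mp (Finset.mem_coe.mp hu)).2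
      exact mtch_inj hpar (hu2 (mtch v) he.symm).symm
  have hca : c a ∉ SC := by
    rw [hSC, Finset.mem_filter]
    rintro ⟨-, v, hv, hs⟩
    have h1 : a = v := hs a hv.symm
    have h2 : b = v := hs b (hab.symm.trans hv.symm)
    exact hab' (h1.trans h2.symm)
  have hSC_le : SC.card ≤ k - 1 := by
    have hsub : SC ⊆ Finset.univ.erase (c a) := fun i hi =>
      Finset.mem_erase.mpr ⟨fun e => hca (e ▸ hi), Finset.mem_univ _⟩
    have hc2 := Finset.card_le_card hsub
    rw [Finset.card_erase_of_mem (Finset.mem_univ _)] at hc2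
    simpa using hc2
  have hAc : (Finset.univ \ A).card ≤ k := by
    have : ((Finset.univ : Finset (Fin k))).card = k := by simp
    rw [← this]
    apply Finset.card_le_card_of_injOn c (fun v _ => Finset.mem_univ _)
    intro u hu v hv he
    have hu' : u ∉ A := (Finset.mem_sdiff.mp (Finset.mem_coe.mp hu)).2
    have hv' : v ∉ A := (Finset.mem_sdiff.mp (Finset.mem_coe.mp hv)).2
    apply hinj
    funext i
    show distToColor (Rn2 n) c u i = distToColor (Rn2 n) c v i
    rw [distToColor_cases hn hpar, distToColor_cases hn hpar]
    have notall : ∀ x : Fin n, x ∉ A → (∃ y, c y = i) → ¬ (∀ y, c y = i → y = mtch x) := by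
      intro x hx hex hall
      obtain ⟨y0, hy0⟩ := hex
      have hmx : c (mtch x) = i := (hall y0 hy0) ▸ hy0
      apply hx
      rw [hA, Finset.mem_filter]
      exact ⟨Finset.mem_univ _, fun w hw => hall w (hw.trans hmx)⟩
    by_cases hex : ∃ y, c y = i
    · rw [if_pos hex, if_pos hex]
      by_cases hci : c u = i
      · rw [if_pos hci, if_pos (he ▸ hci)]
      · rw [if_neg hci, if_neg (fun hcvi => hci (he.trans hcvi)),
          if_neg (notall u hu' hex), if_neg (notall v hv' hex)]
    · rw [if_neg hex, if_neg hex]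
  have hsum : (Finset.univ \ A).card = n - A.card := by
    rw [Finset.card_sdiff_of_subset (Finset.subset_univ _)]
    simp
  have hAn : A.card ≤ n := by
    have := Finset.card_le_card (Finset.subset_univ A)
    simpa using this
  omega

end LocatingRainbow


open LocatingRainbow in
/-- For even `n ≥ 4`, the `(n,2)`-regular graph satisfies `rvcl(R_(n,2)) ≥ n/2 + 1`;
equivalently, it admits no locating rainbow `k`-coloring with `k ≤ n/2`. -/
theorem rvcl_Rn2_lower {n : ℕ} (hn : 4 ≤ n) (hpar : Even n) :
    n / 2 + 1 ≤ rvcl (Rn2 n) ∧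
      ∀ k ≤ n / 2, ∀ c : Fin n → Fin k, ¬ IsLocatingRainbowColoring (Rn2 n) c := by
  refine ⟨?_, fun k hk c => no_locating hn hpar hk c⟩
  have hne : n ∈ {k | ∃ c : Fin n → Fin k, IsLocatingRainbowColoring (Rn2 n) c} :=
    ⟨fun x => x, id_locating hn hpar⟩
  refine le_csInf ⟨n, hne⟩ ?_
  intro m hm
  by_contra hlt
  push_neg at hlt
  obtain ⟨c, hc⟩ := hm
  exact no_locating hn hpar (by omega) c hc
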